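/- Consider the dimensionless regularized rim-lamella system on [τ, t*] with t + t0 > 0, t + t1 > 0, R(t) > 0, V(t) > 0 and h(t) ≥ h_bl(t) > 0 on [τ, t*], We > 0 and 1 − cos θ > 0. If the velocity defect satisfies Δ(τ) ≤ c(τ), then Δ(t) ≤ c(t) for all t ∈ [τ, t*]. -/

import Mathlib

open Real

open Real Set Filter Topology

lemma gronwall_nonneg {ψ ψ' μ : ℝ → ℝ} {a b K : ℝ} (hab : a ≤ b)
    (hd : ∀ x ∈ Set.Icc a b, HasDerivAt ψ (ψ' x) x)
    (hK : ∀ x ∈ Set.Icc a b, |μ x| ≤ K)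
    (hkey : ∀ x ∈ Set.Icc a b, 0 ≤ ψ' x + μ x * ψ x)
    (h0 : 0 ≤ ψ a) : ∀ x ∈ Set.Icc a b, 0 ≤ ψ x := by
  have haI : a ∈ Set.Icc a b := ⟨le_refl a, hab⟩
  have hK0 : 0 ≤ K := le_trans (abs_nonneg _) (hK a haI)
  set f : ℝ → ℝ := fun t => max (-(ψ t)) 0 with hf_def
  set g : ℝ → ℝ := fun t => if ψ t < 0 then -(ψ' t) else 0 with hg_def
  have hψc : ContinuousOn ψ (Set.Icc a b) := fun x hx => (hd x hx).continuousAt.continuousWithinAt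
  have hfc : ContinuousOn f (Set.Icc a b) := fun x hx =>
    ((hψc x hx).neg).max continuousWithinAt_const
  have main : ∀ x ∈ Set.Icc a b, f x ≤ gronwallBound 0 K 0 (x - a) := by
    apply le_gronwallBound_of_liminf_deriv_right_le (f' := g) hfc
    · -- liminf slope condition
      intro x hx r hr
      have hxI : x ∈ Set.Icc a b := Set.mem_of_mem_of_subset hx Set.Ico_subset_Icc_self
      have hψd := hd x hxI
      rcases lt_trichotomy (ψ x) 0 with hneg | heq | hpos
      · have hgx : g x = -(ψ' x) := by simp [hg_def, hneg]
        rw [hgx] at hr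
        have hcont : ContinuousAt ψ x := hψd.continuousAt
        have hev : ∀ᶠ z in 𝓝 x, ψ z < 0 := hcont.eventually_lt continuousAt_const hneg
        have hslope : Tendsto (slope (fun t => -(ψ t)) x) (𝓝[>] x) (𝓝 (-(ψ' x))) :=
          (hasDerivAt_iff_tendsto_slope.mp hψd.neg).mono_left
            (nhdsWithin_mono x (fun z hz => ne_of_gt hz))
        have hev2 : ∀ᶠ z in 𝓝[>] x, slope (fun t => -(ψ t)) x z < r :=
          hslope.eventually_lt_const hr
        have hev3 : ∀ᶠ z in 𝓝[>] x, ψ z < 0 := eventually_nhdsWithin_of_eventually_nhds hev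
        refine ((hev2.and hev3).mono ?_).frequently
        intro z ⟨h1, h2⟩
        have hfz : f z = -(ψ z) := by simp [hf_def, le_of_lt h2]
        have hfx : f x = -(ψ x) := by simp [hf_def, le_of_lt hneg]
        rw [hfz, hfx]
        simpa [slope_def_field, div_eq_inv_mul] using h1
      · have hgx : g x = 0 := by simp [hg_def, heq]
        rw [hgx] at hr
        have hψ'x : 0 ≤ ψ' x := by have := hkey x hxI; rw [heq] at this; linarith
        have hslope : Tendsto (slope (fun t => -(ψ t)) x) (𝓝[>] x) (𝓝 (-(ψ' x))) :=
          (hasDerivAt_iff_tendsto_slope.mp hψd.neg).mono_left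
            (nhdsWithin_mono x (fun z hz => ne_of_gt hz))
        have hev2 : ∀ᶠ z in 𝓝[>] x, slope (fun t => -(ψ t)) x z < r :=
          hslope.eventually_lt_const (lt_of_le_of_lt (neg_nonpos.mpr hψ'x) hr)
        have hev3 : ∀ᶠ z in 𝓝[>] x, x < z := eventually_mem_nhdsWithin
        refine ((hev2.and hev3).mono ?_).frequently
        intro z ⟨h1, h2⟩
        have hfx : f x = 0 := by simp [hf_def, heq]
        rw [hfx, sub_zero]
        have hzx : (0:ℝ) < z - x := by linarith
        have h1' : (z - x)⁻¹ * (-(ψ z) - -(ψ x)) < r := by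
          simpa [slope_def_field, div_eq_inv_mul] using h1
        rw [heq] at h1'
        simp only [neg_zero, sub_zero] at h1'
        have hfz : (z - x)⁻¹ * f z = max ((z - x)⁻¹ * (-(ψ z))) ((z - x)⁻¹ * 0) := by
          rw [hf_def]
          exact mul_max_of_nonneg _ _ (le_of_lt (inv_pos.mpr hzx))
        rw [hfz]
        rw [mul_zero]
        exact max_lt h1' hr
      · have hgx : g x = 0 := by simp [hg_def, not_lt.mpr (le_of_lt hpos)]
        rw [hgx] at hr
        have hcont : ContinuousAt ψ x := hψd.continuousAt
        have hev : ∀ᶠ z in 𝓝 x, 0 < ψ z := continuousAt_const.eventually_lt hcont hpos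
        have hev3 : ∀ᶠ z in 𝓝[>] x, 0 < ψ z := eventually_nhdsWithin_of_eventually_nhds hev
        refine (hev3.mono ?_).frequently
        intro z h2
        have hfz : f z = 0 := by simp [hf_def]; linarith
        have hfx : f x = 0 := by simp [hf_def]; linarith
        rw [hfz, hfx]
        simpa using hr
    · simp [hf_def, neg_nonpos.mpr h0]
    · -- bound
      intro x hx
      have hxI : x ∈ Set.Icc a b := Set.mem_of_mem_of_subset hx Set.Ico_subset_Icc_self
      have hkx := hkey x hxI
      have hKx := abs_le.mp (hK x hxI)
      rcases lt_or_ge (ψ x) 0 with hneg | hnn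
      · have hgx : g x = -(ψ' x) := by simp [hg_def, hneg]
        have hfx : f x = -(ψ x) := by simp [hf_def, le_of_lt hneg]
        rw [hgx, hfx]
        nlinarith [hKx.1, hKx.2]
      · have hgx : g x = 0 := by simp [hg_def, not_lt.mpr hnn]
        have hfx : 0 ≤ f x := le_max_right _ _
        rw [hgx]
        nlinarith
  intro x hx
  have hm := main x hx
  rw [gronwallBound_ε0] at hm
  simp only [zero_mul] at hm
  have h1 : -(ψ x) ≤ f x := le_max_left _ _
  linarith

lemma rim_key (p Rx Ux Vx hh bb cc bl s dU : ℝ)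
    (hs : s ≠ 0) (hh0 : hh ≠ 0) (hV0 : Vx ≠ 0)
    (hmom : Vx * dU = 2 * p * Rx * hh * (Rx * ((1 - bb / hh) / s) - Ux) ^ 2
      - 2 * p * Rx * (cc ^ 2 * hh)) :
    2 * p * Rx * hh * (Rx * ((1 - bb / hh) / s) - Ux)
        * (cc - Rx * ((1 - bb / hh) / s) + Ux)
      + Vx * (cc * ((1 - bb / hh) / s)
          - (Ux * ((1 - bb / hh) / s)
            + Rx * (((0 - (bl * hh - bb * (-(2 / s) * (hh - bb))) / hh ^ 2) * s
                - (1 - bb / hh) * 1) / s ^ 2))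
          + dU)
      + (2 * p * Rx * hh * cc / Vx + (1 - bb / hh) / s)
          * (Vx * (cc - Rx * ((1 - bb / hh) / s) + Ux))
      = Vx * (2 * cc * ((1 - bb / hh) / s)
          + Rx * (3 * (bb / hh) * (1 - bb / hh) / s ^ 2 + bl / (s * hh))) := by
  have hdU : dU = (2 * p * Rx * hh * (Rx * ((1 - bb / hh) / s) - Ux) ^ 2
      - 2 * p * Rx * (cc ^ 2 * hh)) / Vx := by
    rw [eq_div_iff hV0]; linarith [hmom]
  rw [hdU]
  field_simp
  ring
set_option maxHeartbeats 1000000 in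
/-- In the dimensionless regularized rim-lamella system on `[τ, t*]`
(with `t+t0 > 0`, `t+t1 > 0`, `R > 0`, `V > 0`, `h ≥ h_bl > 0`, `We > 0`,
`1 − cos θ > 0`), if the velocity defect satisfies `Δ(τ) ≤ c(τ)`, then
`Δ(t) ≤ c(t)` for all `t ∈ [τ, t*]`. -/
theorem velocity_defect_bounded
    (We t0 t1 a θ τ tstar : ℝ) (hWe : We > 0) (ha : a > 0)
    (hθ : 1 - Real.cos θ > 0) (hτt : τ ≤ tstar)
    (R U V h hbl ubar c : ℝ → ℝ)
    (hbl_def : ∀ t, hbl t = a * Real.sqrt (t + t1))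
    (hubar_def : ∀ t, ubar t = (R t / (t + t0)) * (1 - hbl t / h t))
    (hc_def : ∀ t, c t = Real.sqrt ((1 - Real.cos θ) / (We * h t)))
    (hpos : ∀ t ∈ Set.Icc τ tstar,
      t + t0 > 0 ∧ t + t1 > 0 ∧ R t > 0 ∧ V t > 0 ∧ hbl t > 0 ∧ h t ≥ hbl t)
    (hR : ∀ t ∈ Set.Icc τ tstar, HasDerivAt R (U t) t)
    (hh : ∀ t ∈ Set.Icc τ tstar, HasDerivAt h (-(2 / (t + t0)) * (h t - hbl t)) t)
    (hV : ∀ t ∈ Set.Icc τ tstar, HasDerivAt V (2 * π * R t * h t * (ubar t - U t)) t)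
    (hU : ∀ t ∈ Set.Icc τ tstar, DifferentiableAt ℝ U t)
    (hmom : ∀ t ∈ Set.Icc τ tstar,
      V t * deriv U t
        = 2 * π * R t * h t * (ubar t - U t) ^ 2 - 2 * π * R t * (1 - Real.cos θ) / We)
    (hinit : ubar τ - U τ ≤ c τ) :
    ∀ t ∈ Set.Icc τ tstar, ubar t - U t ≤ c t := by
  have hK0 : (0:ℝ) < (1 - Real.cos θ) / We := div_pos hθ hWe
  have hceq : c = fun t => Real.sqrt ((1 - Real.cos θ) / We / h t) := funext fun t => by
    rw [hc_def, div_div]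
  have hbleq : hbl = fun t => a * Real.sqrt (t + t1) := funext hbl_def
  have hueq : ubar = fun t => R t * ((1 - hbl t / h t) / (t + t0)) :=
    funext fun t => by rw [hubar_def]; ring
  -- main derivative + inequality step
  have hstep : ∀ x ∈ Set.Icc τ tstar,
      HasDerivAt (fun t => V t * (c t - ubar t + U t))
        (deriv (fun t => V t * (c t - ubar t + U t)) x) x ∧
      0 ≤ deriv (fun t => V t * (c t - ubar t + U t)) x
        + (2 * π * R x * h x * c x / V x + (1 - hbl x / h x) / (x + t0))
          * (V x * (c x - ubar x + U x)) := by
    intro x hx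
    obtain ⟨hs, hx1, hRx, hVx, hblx, hhbl⟩ := hpos x hx
    have hhx : h x > 0 := lt_of_lt_of_le hblx hhbl
    have hRd := hR x hx
    have hhd := hh x hx
    have hVd := hV x hx
    have hUd : HasDerivAt U (deriv U x) x := (hU x hx).hasDerivAt
    have hBpos : 0 < Real.sqrt (x + t1) := Real.sqrt_pos.mpr hx1
    -- derivative of hbl
    have hbld : HasDerivAt hbl (a * (1 / (2 * Real.sqrt (x + t1)))) x := by
      rw [hbleq]
      have h1 : HasDerivAt (fun t : ℝ => t + t1) 1 x := (hasDerivAt_id x).add_const t1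
      have h2 := (Real.hasDerivAt_sqrt (ne_of_gt hx1)).comp x h1
      simpa using h2.const_mul a
    -- derivative of q = hbl / h
    have hqd := hbld.div hhd (ne_of_gt hhx)
    -- derivative of gf = (1 - hbl/h)/(t+t0)
    have hnum : HasDerivAt (fun t => 1 - hbl t / h t)
        (0 - (a * (1 / (2 * Real.sqrt (x + t1))) * h x
          - hbl x * (-(2 / (x + t0)) * (h x - hbl x))) / h x ^ 2) x :=
      (hasDerivAt_const x (1:ℝ)).sub hqd
    have hden : HasDerivAt (fun t : ℝ => t + t0) 1 x := (hasDerivAt_id x).add_const t0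
    have hgd := hnum.div hden (ne_of_gt hs)
    -- derivative of ubar
    have hud := hRd.mul hgd
    rw [show (R * ((fun t => 1 - hbl t / h t) / fun t => t + t0)) = ubar from hueq.symm] at hud
    simp only [Pi.div_apply] at hud
    -- derivative of c
    have hinner : HasDerivAt (fun t => (1 - Real.cos θ) / We / h t)
        ((0 * h x - (1 - Real.cos θ) / We * (-(2 / (x + t0)) * (h x - hbl x))) / h x ^ 2) x :=
      (hasDerivAt_const x ((1 - Real.cos θ) / We)).div hhd (ne_of_gt hhx)
    have hKh : 0 < (1 - Real.cos θ) / We / h x := div_pos hK0 hhx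
    have hcomp : HasDerivAt (fun t => Real.sqrt ((1 - Real.cos θ) / We / h t))
        (1 / (2 * Real.sqrt ((1 - Real.cos θ) / We / h x))
          * ((0 * h x - (1 - Real.cos θ) / We * (-(2 / (x + t0)) * (h x - hbl x))) / h x ^ 2)) x :=
      (Real.hasDerivAt_sqrt (ne_of_gt hKh)).comp x hinner
    have hcx : c x = Real.sqrt ((1 - Real.cos θ) / We / h x) := by rw [hceq]
    have hcd0 : HasDerivAt (fun t => Real.sqrt ((1 - Real.cos θ) / We / h t))
        (Real.sqrt ((1 - Real.cos θ) / We / h x) * ((1 - hbl x / h x) / (x + t0))) x := by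
      convert hcomp using 1
      set S := Real.sqrt ((1 - Real.cos θ) / We / h x) with hS_def
      have hSpos : 0 < S := Real.sqrt_pos.mpr hKh
      have hsq : S ^ 2 = (1 - Real.cos θ) / We / h x := Real.sq_sqrt hKh.le
      have hK0eq : (1 - Real.cos θ) / We = S ^ 2 * h x := by
        rw [hsq]; field_simp
      rw [hK0eq]
      field_simp
      ring
    rw [← hceq] at hcd0
    rw [← hcx] at hcd0
    -- derivative of psi
    have hin := (hcd0.sub hud).add hUd
    have hψd := hVd.mul hin
    simp only [Pi.mul_def, Pi.add_apply, Pi.sub_apply] at hψd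
    refine ⟨hψd.deriv ▸ hψd, ?_⟩
    rw [hψd.deriv]
    -- momentum in rim_key form
    have hux : ubar x = R x * ((1 - hbl x / h x) / (x + t0)) := by rw [hueq]
    have hcos : (1 - Real.cos θ) / We = c x ^ 2 * h x := by
      have hc2 : c x ^ 2 = (1 - Real.cos θ) / We / h x := by
        rw [hcx]; exact Real.sq_sqrt hKh.le
      rw [hc2]; field_simp
    have hmom' : V x * deriv U x
        = 2 * π * R x * h x * (R x * ((1 - hbl x / h x) / (x + t0)) - U x) ^ 2
          - 2 * π * R x * (c x ^ 2 * h x) := by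
      rw [hmom x hx, hux, mul_div_assoc, hcos]
    have hcpos : 0 < c x := by rw [hcx]; exact Real.sqrt_pos.mpr hKh
    have hEq := rim_key π (R x) (U x) (V x) (h x) (hbl x) (c x)
      (a * (1 / (2 * Real.sqrt (x + t1)))) (x + t0) (deriv U x)
      (ne_of_gt hs) (ne_of_gt hhx) (ne_of_gt hVx) hmom'
    rw [hux]
    have hq1 : hbl x / h x ≤ 1 := (div_le_one hhx).mpr hhbl
    have hq0 : 0 < hbl x / h x := div_pos hblx hhx
    have hQnonneg : 0 ≤ V x * (2 * c x * ((1 - hbl x / h x) / (x + t0))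
        + R x * (3 * (hbl x / h x) * (1 - hbl x / h x) / (x + t0) ^ 2
          + a * (1 / (2 * Real.sqrt (x + t1))) / ((x + t0) * h x))) := by
      apply mul_nonneg hVx.le
      have t1' : 0 ≤ 3 * (hbl x / h x) * (1 - hbl x / h x) / (x + t0) ^ 2 := by
        apply div_nonneg _ (sq_nonneg _)
        nlinarith
      have t2' : 0 ≤ a * (1 / (2 * Real.sqrt (x + t1))) / ((x + t0) * h x) := by
        apply div_nonneg _ (le_of_lt (mul_pos hs hhx))
        positivity
      have t3' : 0 ≤ 2 * c x * ((1 - hbl x / h x) / (x + t0)) := by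
        apply mul_nonneg (by positivity)
        apply div_nonneg (by linarith) hs.le
      have t4' : 0 ≤ R x * (3 * (hbl x / h x) * (1 - hbl x / h x) / (x + t0) ^ 2
          + a * (1 / (2 * Real.sqrt (x + t1))) / ((x + t0) * h x)) :=
        mul_nonneg hRx.le (by linarith)
      linarith
    rw [hEq]
    exact hQnonneg
  -- continuity of mu and bound
  have hRc : ContinuousOn R (Set.Icc τ tstar) := fun x hx => (hR x hx).continuousAt.continuousWithinAt
  have hhc : ContinuousOn h (Set.Icc τ tstar) := fun x hx => (hh x hx).continuousAt.continuousWithinAt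
  have hVc : ContinuousOn V (Set.Icc τ tstar) := fun x hx => (hV x hx).continuousAt.continuousWithinAt
  have hhne : ∀ x ∈ Set.Icc τ tstar, h x ≠ 0 := fun x hx =>
    ne_of_gt (lt_of_lt_of_le (hpos x hx).2.2.2.2.1 (hpos x hx).2.2.2.2.2)
  have hVne : ∀ x ∈ Set.Icc τ tstar, V x ≠ 0 := fun x hx => ne_of_gt (hpos x hx).2.2.2.1
  have hsne : ∀ x ∈ Set.Icc τ tstar, x + t0 ≠ 0 := fun x hx => ne_of_gt (hpos x hx).1
  have hcc : ContinuousOn c (Set.Icc τ tstar) := by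
    rw [hceq]
    exact Real.continuous_sqrt.comp_continuousOn (continuousOn_const.div hhc hhne)
  have hblc : ContinuousOn hbl (Set.Icc τ tstar) := by
    rw [hbleq]
    exact (continuous_const.mul
      (Real.continuous_sqrt.comp (continuous_id.add continuous_const))).continuousOn
  have hμc : ContinuousOn
      (fun t => 2 * π * R t * h t * c t / V t + (1 - hbl t / h t) / (t + t0))
      (Set.Icc τ tstar) := by
    apply ContinuousOn.add
    · exact ((((continuousOn_const.mul hRc).mul hhc).mul hcc)).div hVc hVne
    · exact (continuousOn_const.sub (hblc.div hhc hhne)).div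
        ((continuous_id.add continuous_const).continuousOn) hsne
  obtain ⟨K, hKb⟩ := isCompact_Icc.exists_bound_of_continuousOn hμc
  have hK' : ∀ x ∈ Set.Icc τ tstar,
      |2 * π * R x * h x * c x / V x + (1 - hbl x / h x) / (x + t0)| ≤ K := fun x hx => by
    simpa [Real.norm_eq_abs] using hKb x hx
  -- initial condition
  have hψτ : 0 ≤ V τ * (c τ - ubar τ + U τ) := by
    have hVτ : 0 < V τ := (hpos τ ⟨le_refl τ, hτt⟩).2.2.2.1
    exact mul_nonneg hVτ.le (by linarith)
  have hmain := gronwall_nonneg (ψ := fun t => V t * (c t - ubar t + U t))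
    (ψ' := deriv (fun t => V t * (c t - ubar t + U t)))
    (μ := fun t => 2 * π * R t * h t * c t / V t + (1 - hbl t / h t) / (t + t0))
    hτt (fun x hx => (hstep x hx).1) hK' (fun x hx => (hstep x hx).2) hψτ
  intro t ht
  have h1 : 0 ≤ V t * (c t - ubar t + U t) := hmain t ht
  have hVt : 0 < V t := (hpos t ht).2.2.2.1
  nlinarith [h1, hVt]
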